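/- Let Σ be a generable set of d-dimensional nonsingular cones in ℤ^d and let ε₁ ≠ ε₂ ∈ E(Σ) satisfy Σ(ε₁) ∩ Σ(ε₂) ≠ ∅. Then the standard blow-up Σ̃ of Σ along ε₁, ε₂ is again a generable set of d-dimensional nonsingular cones in ℤ^d. -/

import Mathlib

open Finset

/-- The cone in `ℝ^d` generated (over the nonnegative reals) by a finite set of
integer vectors. -/
def coneOf {d : ℕ} (S : Finset (Fin d → ℤ)) : Set (Fin d → ℝ) :=
  {x | ∃ c : (Fin d → ℤ) → ℝ, (∀ v, 0 ≤ c v) ∧ x = ∑ v ∈ S, c v • (fun l => (v l : ℝ))}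

/-- `S` is the set of primitive edge generators of a `d`-dimensional nonsingular cone in
`ℤ^d`, i.e. `S` consists of `d` vectors forming a `ℤ`-basis of `ℤ^d`.  We identify such a
cone with its finite set of edge generators, an edge with its unique primitive generator. -/
def IsNsCone (d : ℕ) (S : Finset (Fin d → ℤ)) : Prop :=
  S.card = d ∧ Submodule.span ℤ (S : Set (Fin d → ℤ)) = ⊤

/-- The set of edges `E(Σ)` of a finite set of cones, each cone being given by its finite
set of edge generators. -/
def edges {d : ℕ} (F : Finset (Finset (Fin d → ℤ))) : Finset (Fin d → ℤ) :=
  F.biUnion id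

/-- A finite set of (`d`-dimensional nonsingular) cones is generable if the collection of
all the faces of all its cones is a fan: the intersection of any two such faces is again a
face of both.  A face of a cone corresponds to a subset of its set of edge generators. -/
def IsGenerable {d : ℕ} (F : Finset (Finset (Fin d → ℤ))) : Prop :=
  ∀ σ ∈ F, ∀ σ' ∈ F, ∀ s ⊆ σ, ∀ s' ⊆ σ',
    (∃ t ⊆ σ, coneOf s ∩ coneOf s' = coneOf t) ∧
    (∃ t' ⊆ σ', coneOf s ∩ coneOf s' = coneOf t')

/-- The standard blow-up of `F` along the edges `ε₁, ε₂`: every cone `σ` containing both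
`ε₁` and `ε₂` is replaced by the two cones `σ(ε₁)` and `σ(ε₂)` (where `σ(εᵢ)` is generated
by `ε₁ + ε₂` together with the edges of `σ` other than `ε_j`, `{i,j} = {1,2}`), and all
other cones are kept. -/
def blowUp {d : ℕ} (F : Finset (Finset (Fin d → ℤ))) (ε₁ ε₂ : Fin d → ℤ) :
    Finset (Finset (Fin d → ℤ)) :=
  F.filter (fun σ => ¬(ε₁ ∈ σ ∧ ε₂ ∈ σ)) ∪
    (F.filter (fun σ => ε₁ ∈ σ ∧ ε₂ ∈ σ)).biUnion
      (fun σ => {insert (ε₁ + ε₂) (σ.erase ε₂), insert (ε₁ + ε₂) (σ.erase ε₁)})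

namespace BU
variable {d : ℕ}

noncomputable def Rv (v : Fin d → ℤ) : Fin d → ℝ := fun l => (v l : ℝ)

lemma Rv_inj : Function.Injective (Rv (d := d)) := by
  intro u v h
  funext l
  have h2 : ((u l : ℤ) : ℝ) = ((v l : ℤ) : ℝ) := congrFun h l
  exact_mod_cast h2

lemma Rv_add (u v : Fin d → ℤ) : Rv (u + v) = Rv u + Rv v := by
  funext l
  show ((u l + v l : ℤ) : ℝ) = (u l : ℝ) + (v l : ℝ)
  push_cast; ring

lemma mem_coneOf_iff {S : Finset (Fin d → ℤ)} {x : Fin d → ℝ} :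
    x ∈ coneOf S ↔ ∃ c : (Fin d → ℤ) → ℝ, (∀ v, 0 ≤ c v) ∧ x = ∑ v ∈ S, c v • Rv v :=
  Iff.rfl

lemma coneOf_mono {S T : Finset (Fin d → ℤ)} (h : S ⊆ T) : coneOf S ⊆ coneOf T := by
  intro x hx
  rw [mem_coneOf_iff] at hx ⊢
  obtain ⟨c, hc, rfl⟩ := hx
  refine ⟨fun v => if v ∈ S then c v else 0, fun v => by dsimp; split <;> simp [hc], ?_⟩
  simp only [ite_smul, zero_smul]
  rw [Finset.sum_ite_mem, Finset.inter_eq_right.mpr h]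

lemma mem_coneOf_self {S : Finset (Fin d → ℤ)} {v : Fin d → ℤ} (h : v ∈ S) :
    Rv v ∈ coneOf S := by
  rw [mem_coneOf_iff]
  refine ⟨fun w => if w = v then 1 else 0, fun w => by dsimp; split <;> norm_num, ?_⟩
  simp only [ite_smul, zero_smul, one_smul, Finset.sum_ite_eq', h, if_true]

lemma zero_mem_coneOf (S : Finset (Fin d → ℤ)) : (0 : Fin d → ℝ) ∈ coneOf S := by
  rw [mem_coneOf_iff]
  exact ⟨fun _ => 0, fun _ => le_refl _, by simp⟩

lemma add_mem_coneOf {S : Finset (Fin d → ℤ)} {x y : Fin d → ℝ}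
    (hx : x ∈ coneOf S) (hy : y ∈ coneOf S) : x + y ∈ coneOf S := by
  rw [mem_coneOf_iff] at hx hy ⊢
  obtain ⟨c, hc, rfl⟩ := hx
  obtain ⟨c', hc', rfl⟩ := hy
  exact ⟨c + c', fun v => add_nonneg (hc v) (hc' v), by
    rw [← Finset.sum_add_distrib]; exact Finset.sum_congr rfl fun v _ => (add_smul _ _ _).symm⟩

lemma smul_mem_coneOf {S : Finset (Fin d → ℤ)} {x : Fin d → ℝ} {r : ℝ}
    (hr : 0 ≤ r) (hx : x ∈ coneOf S) : r • x ∈ coneOf S := by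
  rw [mem_coneOf_iff] at hx ⊢
  obtain ⟨c, hc, rfl⟩ := hx
  exact ⟨fun v => r * c v, fun v => mul_nonneg hr (hc v), by
    rw [Finset.smul_sum]; exact Finset.sum_congr rfl fun v _ => (smul_smul _ _ _)⟩

lemma coneOf_subset {S T : Finset (Fin d → ℤ)} (h : ∀ v ∈ S, Rv v ∈ coneOf T) :
    coneOf S ⊆ coneOf T := by
  intro x hx
  rw [mem_coneOf_iff] at hx
  obtain ⟨c, hc, rfl⟩ := hx
  exact Finset.sum_induction _ _ (fun _ _ => add_mem_coneOf) (zero_mem_coneOf T)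
    (fun v hv => smul_mem_coneOf (hc v) (h v hv))

/-- The `ℤ`-linear map from integer vectors to real vectors. -/
noncomputable def Lmap : (Fin d → ℤ) →ₗ[ℤ] (Fin d → ℝ) where
  toFun := Rv
  map_add' := Rv_add
  map_smul' := by
    intro n v
    funext l
    show ((n * v l : ℤ) : ℝ) = (n • fun l => ((v l : ℤ) : ℝ)) l
    have : (n • fun l => ((v l : ℤ) : ℝ)) l = n • ((v l : ℤ) : ℝ) := rfl
    rw [this]
    push_cast
    simp

lemma li_aux {B : Finset (Fin d → ℤ)} (hB : IsNsCone d B) :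
    LinearIndependent ℝ (fun v : {x // x ∈ B} => Rv (v : Fin d → ℤ)) := by
  apply linearIndependent_of_top_le_span_of_card_eq_finrank
  · -- span
    rintro x -
    have hsingle : ∀ i : Fin d, (Pi.single i (1:ℝ)) ∈
        Submodule.span ℝ (Set.range (fun v : {x // x ∈ B} => Rv (v : Fin d → ℤ))) := by
      intro i
      have hz : (Pi.single i 1 : Fin d → ℤ) ∈ Submodule.span ℤ (B : Set (Fin d → ℤ)) := by
        rw [hB.2]; trivial
      obtain ⟨f, -, hf⟩ := Submodule.mem_span_finset.1 hz
      have : (Pi.single i (1:ℝ)) = ∑ v ∈ B, ((f v : ℝ)) • Rv v := by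
        have h2 := congrArg Lmap hf
        rw [map_sum] at h2
        have h3 : ∀ v ∈ B, Lmap (f v • v) = (f v : ℝ) • Rv v := by
          intro v _
          rw [map_smul]
          exact (Int.cast_smul_eq_zsmul ℝ (f v) (Rv v)).symm
        rw [Finset.sum_congr rfl h3] at h2
        rw [h2]
        funext l
        simp only [Lmap, LinearMap.coe_mk, AddHom.coe_mk, Rv]
        by_cases hl : l = i <;> simp [hl, Pi.single_apply]
      rw [this]
      apply Submodule.sum_mem
      intro v hv
      exact Submodule.smul_mem _ _ (Submodule.subset_span ⟨⟨v, hv⟩, rfl⟩)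
    have hx : x ∈ Submodule.span ℝ (Set.range (Pi.basisFun ℝ (Fin d))) := by
      rw [(Pi.basisFun ℝ (Fin d)).span_eq]; trivial
    refine Submodule.span_le.2 ?_ hx
    rintro _ ⟨i, rfl⟩
    rw [Pi.basisFun_apply]
    exact hsingle i
  · rw [Fintype.card_coe, hB.1, Module.finrank_pi]
    simp

lemma coeff_unique {B : Finset (Fin d → ℤ)} (hB : IsNsCone d B) {c c' : (Fin d → ℤ) → ℝ}
    (h : ∑ v ∈ B, c v • Rv v = ∑ v ∈ B, c' v • Rv v) : ∀ v ∈ B, c v = c' v := by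
  have hli := linearIndependent_iff'.1 (li_aux hB)
  intro v hv
  have h0 : ∑ w ∈ Finset.univ (α := {x // x ∈ B}), (c w.1 - c' w.1) • Rv w.1 = 0 := by
    rw [Finset.univ_eq_attach]
    have : ∑ w ∈ B.attach, (c w.1 - c' w.1) • Rv w.1 = ∑ w ∈ B, (c w - c' w) • Rv w :=
      Finset.sum_attach B (fun w => (c w - c' w) • Rv w)
    rw [this]
    simp only [sub_smul]
    rw [Finset.sum_sub_distrib, h, sub_self]
  have h2 : c v - c' v = 0 := hli Finset.univ (fun w => c w.1 - c' w.1) h0 ⟨v, hv⟩ (Finset.mem_univ _)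
  linarith

lemma sum_extend {B s : Finset (Fin d → ℤ)} (hs : s ⊆ B) (c : (Fin d → ℤ) → ℝ) :
    ∑ v ∈ s, c v • Rv v = ∑ v ∈ B, (if v ∈ s then c v else 0) • Rv v := by
  have h1 : ∑ v ∈ s, c v • Rv v = ∑ v ∈ s, (if v ∈ s then c v else 0) • Rv v :=
    Finset.sum_congr rfl (fun v hv => by rw [if_pos hv])
  rw [h1]
  exact Finset.sum_subset hs (fun v _ hv => by rw [if_neg hv, zero_smul])

lemma sum_indicator' {B : Finset (Fin d → ℤ)} {v : Fin d → ℤ} (hv : v ∈ B) (r : ℝ) :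
    ∑ w ∈ B, (if w = v then r else 0) • Rv w = r • Rv v := by
  simp only [ite_smul, zero_smul, Finset.sum_ite_eq', hv, if_true]

lemma lemA {B s s' : Finset (Fin d → ℤ)} (hB : IsNsCone d B) (hs : s ⊆ B) (hs' : s' ⊆ B) :
    coneOf s ∩ coneOf s' = coneOf (s ∩ s') := by
  apply Set.Subset.antisymm
  · rintro x ⟨hx, hx'⟩
    rw [mem_coneOf_iff] at hx hx'
    rw [mem_coneOf_iff]
    obtain ⟨c, hc, rfl⟩ := hx
    obtain ⟨c', hc', hxx⟩ := hx'
    have hu := coeff_unique hB (c := fun v => if v ∈ s then c v else 0)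
      (c' := fun v => if v ∈ s' then c' v else 0)
      (by rw [← sum_extend hs, ← sum_extend hs', ← hxx])
    refine ⟨fun v => if v ∈ s then c v else 0,
      fun v => by dsimp; split
                  · exact hc v
                  · exact le_refl 0, ?_⟩
    have h2 : ∀ v ∈ s, v ∉ s ∩ s' → (if v ∈ s then c v else 0) • Rv v = 0 := by
      intro v hv hvn
      have hvs' : v ∉ s' := fun hv' => hvn (Finset.mem_inter.2 ⟨hv, hv'⟩)
      have := hu v (hs hv)
      rw [if_pos hv] at this
      rw [if_neg hvs'] at this
      rw [if_pos hv, this, zero_smul]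
    rw [Finset.sum_subset Finset.inter_subset_left h2]
    exact Finset.sum_congr rfl fun v hv => by rw [if_pos hv]
  · intro x hx
    exact ⟨coneOf_mono Finset.inter_subset_left hx, coneOf_mono Finset.inter_subset_right hx⟩

lemma mem_of_basis {B s : Finset (Fin d → ℤ)} {v : Fin d → ℤ} (hB : IsNsCone d B)
    (hs : s ⊆ B) (hv : v ∈ B) (hvc : Rv v ∈ coneOf s) : v ∈ s := by
  by_contra hns
  obtain ⟨c, hc, hx⟩ := mem_coneOf_iff.1 hvc
  have h2 : ∑ w ∈ B, (if w ∈ s then c w else 0) • Rv w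
      = ∑ w ∈ B, (if w = v then (1:ℝ) else 0) • Rv w := by
    rw [← sum_extend hs, ← hx, sum_indicator' hv, one_smul]
  have := coeff_unique hB h2 v hv
  rw [if_neg hns, if_pos rfl] at this
  norm_num at this

lemma int_coords {B : Finset (Fin d → ℤ)} (hB : IsNsCone d B) (z : Fin d → ℤ) :
    ∃ n : (Fin d → ℤ) → ℤ, Rv z = ∑ v ∈ B, ((n v : ℝ)) • Rv v := by
  have hz : z ∈ Submodule.span ℤ (B : Set (Fin d → ℤ)) := by rw [hB.2]; trivial
  obtain ⟨f, -, hf⟩ := Submodule.mem_span_finset.1 hz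
  refine ⟨f, ?_⟩
  have h2 := congrArg Lmap hf
  rw [map_sum] at h2
  have h3 : ∀ v ∈ B, Lmap (f v • v) = (f v : ℝ) • Rv v := by
    intro v _
    rw [map_smul]
    exact (Int.cast_smul_eq_zsmul ℝ (f v) (Rv v)).symm
  rw [Finset.sum_congr rfl h3] at h2
  exact h2.symm

lemma edge_subset {B B' t t' : Finset (Fin d → ℤ)} (hB : IsNsCone d B) (hB' : IsNsCone d B')
    (ht : t ⊆ B) (ht' : t' ⊆ B') (hcone : coneOf t = coneOf t') : t ⊆ t' := by
  intro v hvt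
  have hv1 : Rv v ∈ coneOf t' := hcone ▸ mem_coneOf_self hvt
  obtain ⟨c, hc0, hcv⟩ := mem_coneOf_iff.1 hv1
  have hwb : ∀ w : (Fin d → ℤ), ∃ bw : (Fin d → ℤ) → ℝ,
      (∀ u, 0 ≤ bw u) ∧ (w ∈ t' → Rv w = ∑ u ∈ t, bw u • Rv u) := by
    intro w
    by_cases hw : w ∈ t'
    · obtain ⟨bw, h0, he⟩ := mem_coneOf_iff.1 (show Rv w ∈ coneOf t by
        rw [hcone]; exact mem_coneOf_self hw)
      exact ⟨bw, h0, fun _ => he⟩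
    · exact ⟨0, by simp, fun h => absurd h hw⟩
  choose b hb0 hb using hwb
  have hmain : Rv v = ∑ u ∈ t, (∑ w ∈ t', c w * b w u) • Rv u := by
    rw [hcv, Finset.sum_congr rfl (fun w hw => by rw [hb w hw])]
    rw [Finset.sum_congr rfl (fun w (hw : w ∈ t') => Finset.smul_sum
      (r := c w) (s := t) (f := fun u => b w u • Rv u))]
    rw [Finset.sum_comm]
    refine Finset.sum_congr rfl fun u _ => ?_
    rw [Finset.sum_smul]
    exact Finset.sum_congr rfl fun w _ => (smul_smul _ _ _)
  have hvB : v ∈ B := ht hvt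
  have huni := coeff_unique hB (c := fun u => if u ∈ t then (∑ w ∈ t', c w * b w u) else 0)
    (c' := fun u => if u = v then (1:ℝ) else 0)
    (by rw [← sum_extend ht, ← hmain, sum_indicator' hvB, one_smul])
  have hone : ∑ w ∈ t', c w * b w v = 1 := by
    have := huni v hvB
    rw [if_pos hvt, if_pos rfl] at this
    exact this
  have hex : ∃ w₀ ∈ t', 0 < c w₀ * b w₀ v := by
    by_contra h
    push_neg at h
    have hz : ∑ w ∈ t', c w * b w v = 0 := Finset.sum_eq_zero fun w hw =>
      le_antisymm (h w hw) (mul_nonneg (hc0 w) (hb0 w v))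
    rw [hz] at hone
    norm_num at hone
  obtain ⟨w₀, hw₀t', hpos⟩ := hex
  have hcw₀ : 0 < c w₀ := by
    rcases (hc0 w₀).lt_or_eq with h | h
    · exact h
    · rw [← h] at hpos; simp at hpos
  have hbw₀v : 0 < b w₀ v := by
    rcases (hb0 w₀ v).lt_or_eq with h | h
    · exact h
    · rw [← h] at hpos; simp at hpos
  have hzero : ∀ u ∈ t, u ≠ v → b w₀ u = 0 := by
    intro u hu hneu
    have hsum0 : ∑ w ∈ t', c w * b w u = 0 := by
      have := huni u (ht hu)
      rw [if_pos hu, if_neg hneu] at this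
      exact this
    have := (Finset.sum_eq_zero_iff_of_nonneg
      (fun w _ => mul_nonneg (hc0 w) (hb0 w u))).1 hsum0 w₀ hw₀t'
    rcases mul_eq_zero.1 this with h | h
    · exact absurd h (ne_of_gt hcw₀)
    · exact h
  have hw₀v : Rv w₀ = b w₀ v • Rv v := by
    rw [hb w₀ hw₀t']
    exact Finset.sum_eq_single v (fun u hu hneu => by rw [hzero u hu hneu, zero_smul])
      (fun h => absurd hvt h)
  obtain ⟨n, hn⟩ := int_coords hB w₀
  have hnv : (if v ∈ B then (0:ℝ) else 0) = 0 := by simp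
  have hcoef : ∑ u ∈ B, ((n u : ℝ)) • Rv u = ∑ u ∈ B, (if u = v then b w₀ v else 0) • Rv u := by
    rw [← hn, sum_indicator' hvB, ← hw₀v]
  have hnveq : (n v : ℝ) = b w₀ v := by
    have := coeff_unique hB hcoef v hvB
    rw [if_pos rfl] at this
    exact this
  obtain ⟨m, hm⟩ := int_coords hB' v
  have hw₀B' : w₀ ∈ B' := ht' hw₀t'
  have hv2 : Rv v = (b w₀ v)⁻¹ • Rv w₀ := by
    rw [hw₀v, smul_smul, inv_mul_cancel₀ (ne_of_gt hbw₀v), one_smul]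
  have hcoef' : ∑ w ∈ B', ((m w : ℝ)) • Rv w
      = ∑ w ∈ B', (if w = w₀ then (b w₀ v)⁻¹ else 0) • Rv w := by
    rw [← hm, sum_indicator' hw₀B', ← hv2]
  have hmw : (m w₀ : ℝ) = (b w₀ v)⁻¹ := by
    have := coeff_unique hB' hcoef' w₀ hw₀B'
    rw [if_pos rfl] at this
    exact this
  have hprod : (m w₀ : ℝ) * (n v : ℝ) = 1 := by
    rw [hmw, hnveq]
    exact inv_mul_cancel₀ (ne_of_gt hbw₀v)
  have hint : m w₀ * n v = 1 := by exact_mod_cast hprod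
  have hnpos : 0 < n v := by
    have : (0:ℝ) < (n v : ℝ) := hnveq ▸ hbw₀v
    exact_mod_cast this
  have hunit : IsUnit (n v) := IsUnit.of_mul_eq_one _ (by rw [mul_comm] at hint; exact hint)
  have hnv1 : n v = 1 := by
    rcases Int.isUnit_iff.1 hunit with h | h
    · exact h
    · rw [h] at hnpos; norm_num at hnpos
  have hb1 : b w₀ v = 1 := by rw [← hnveq, hnv1]; norm_num
  have : Rv w₀ = Rv v := by rw [hw₀v, hb1, one_smul]
  rw [← Rv_inj this]
  exact hw₀t'


lemma masterF {F : Finset (Finset (Fin d → ℤ))}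
    (hns : ∀ σ ∈ F, IsNsCone d σ) (hgen : IsGenerable F)
    {σ σ' : Finset (Fin d → ℤ)} (hσ : σ ∈ F) (hσ' : σ' ∈ F) :
    coneOf σ ∩ coneOf σ' = coneOf (σ ∩ σ') := by
  obtain ⟨⟨t, htσ, ht⟩, ⟨t', ht'σ, ht'⟩⟩ :=
    hgen σ hσ σ' hσ' σ (subset_refl σ) σ' (subset_refl σ')
  have htt' : t ⊆ t' := edge_subset (hns σ hσ) (hns σ' hσ') htσ ht'σ (ht.symm.trans ht')
  apply Set.Subset.antisymm
  · rw [ht]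
    exact coneOf_mono (fun v hv => Finset.mem_inter.2 ⟨htσ hv, ht'σ (htt' hv)⟩)
  · intro x hx
    exact ⟨coneOf_mono Finset.inter_subset_left hx, coneOf_mono Finset.inter_subset_right hx⟩

/-- If every pair of top cones intersects in the cone of the finset intersection,
the family is generable (faces intersect in the cone of the intersection of the faces). -/
lemma face_master {G : Finset (Finset (Fin d → ℤ))}
    (hns : ∀ σ ∈ G, IsNsCone d σ)
    (hmas : ∀ σ ∈ G, ∀ σ' ∈ G, coneOf σ ∩ coneOf σ' = coneOf (σ ∩ σ'))
    {σ σ' s s' : Finset (Fin d → ℤ)} (hσ : σ ∈ G) (hσ' : σ' ∈ G)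
    (hs : s ⊆ σ) (hs' : s' ⊆ σ') :
    coneOf s ∩ coneOf s' = coneOf (s ∩ s') := by
  apply Set.Subset.antisymm
  · intro x hx
    have hx1 : x ∈ coneOf (σ ∩ σ') := by
      rw [← hmas σ hσ σ' hσ']
      exact ⟨coneOf_mono hs hx.1, coneOf_mono hs' hx.2⟩
    have hx2 : x ∈ coneOf (s ∩ (σ ∩ σ')) := by
      rw [← lemA (hns σ hσ) hs (Finset.inter_subset_left)]
      exact ⟨hx.1, hx1⟩
    have hx3 : x ∈ coneOf ((s ∩ (σ ∩ σ')) ∩ s') := by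
      rw [← lemA (hns σ' hσ') (fun v hv => (Finset.mem_inter.1
        (Finset.mem_inter.1 hv).2).2) hs']
      exact ⟨hx2, hx.2⟩
    refine coneOf_mono (fun v hv => ?_) hx3
    have h1 := Finset.mem_inter.1 hv
    exact Finset.mem_inter.2 ⟨(Finset.mem_inter.1 h1.1).1, h1.2⟩
  · intro x hx
    exact ⟨coneOf_mono Finset.inter_subset_left hx, coneOf_mono Finset.inter_subset_right hx⟩

lemma ne_zero_of_mem {B : Finset (Fin d → ℤ)} {v : Fin d → ℤ} (hB : IsNsCone d B)
    (hv : v ∈ B) : v ≠ 0 := by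
  intro h
  have hRv : Rv v = 0 := by
    rw [h]; funext l; simp [Rv]
  have h0 : ∑ w ∈ B, (if w = v then (1:ℝ) else 0) • Rv w
      = ∑ w ∈ B, (fun _ : Fin d → ℤ => (0:ℝ)) w • Rv w := by
    rw [sum_indicator' hv, one_smul, hRv]
    simp
  have := coeff_unique hB h0 v hv
  rw [if_pos rfl] at this
  norm_num at this

lemma e_notin {B : Finset (Fin d → ℤ)} {ε₁ ε₂ : Fin d → ℤ} (hB : IsNsCone d B)
    (h1 : ε₁ ∈ B) (h2 : ε₂ ∈ B) (hne : ε₁ ≠ ε₂) : ε₁ + ε₂ ∉ B := by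
  intro hmem
  have hne1 : ε₁ + ε₂ ≠ ε₁ := by
    intro h
    exact ne_zero_of_mem hB h2 (by linear_combination h - (ε₁ : Fin d → ℤ))
  have hne2 : ε₁ + ε₂ ≠ ε₂ := by
    intro h
    exact ne_zero_of_mem hB h1 (by linear_combination h - (ε₂ : Fin d → ℤ))
  have hsum : ∑ w ∈ B, (if w = ε₁ + ε₂ then (1:ℝ) else 0) • Rv w
      = ∑ w ∈ B, (fun w => (if w = ε₁ then (1:ℝ) else 0) + (if w = ε₂ then (1:ℝ) else 0)) w • Rv w := by
    rw [sum_indicator' hmem, one_smul]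
    have : ∀ w ∈ B, ((if w = ε₁ then (1:ℝ) else 0) + (if w = ε₂ then (1:ℝ) else 0)) • Rv w
        = (if w = ε₁ then (1:ℝ) else 0) • Rv w + (if w = ε₂ then (1:ℝ) else 0) • Rv w :=
      fun w _ => add_smul _ _ _
    rw [Finset.sum_congr rfl this, Finset.sum_add_distrib, sum_indicator' h1, sum_indicator' h2,
      one_smul, one_smul, Rv_add]
  have := coeff_unique hB hsum (ε₁ + ε₂) hmem
  rw [if_pos rfl] at this
  rw [if_neg hne1, if_neg hne2] at this
  norm_num at this

lemma nsBlow {B : Finset (Fin d → ℤ)} {ε₁ ε₂ e : Fin d → ℤ} (hB : IsNsCone d B)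
    (h1 : ε₁ ∈ B) (h2 : ε₂ ∈ B) (hne : ε₁ ≠ ε₂) (he : e = ε₁ + ε₂) :
    IsNsCone d (insert e (B.erase ε₂)) := by
  subst he
  have hee : ε₁ + ε₂ ∉ B.erase ε₂ := fun h =>
    e_notin hB h1 h2 hne (Finset.mem_of_mem_erase h)
  constructor
  · rw [Finset.card_insert_of_notMem hee, Finset.card_erase_of_mem h2, hB.1]
    have hd : 0 < d := hB.1 ▸ Finset.card_pos.2 ⟨ε₁, h1⟩
    omega
  · apply le_antisymm le_top
    rw [← hB.2]
    apply Submodule.span_le.2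
    intro v hv
    rw [Finset.mem_coe] at hv
    by_cases hv2 : v = ε₂
    · subst hv2
      have hrw : v = (ε₁ + v) - ε₁ := by ring
      rw [hrw]
      exact sub_mem
        (Submodule.subset_span (by simp))
        (Submodule.subset_span (by simp [Finset.mem_insert, Finset.mem_erase, hne, h1]))
    · exact Submodule.subset_span (by simp [Finset.mem_insert, Finset.mem_erase, hv2, hv])

lemma keyK {B w : Finset (Fin d → ℤ)} {ε₁ ε₂ e : Fin d → ℤ} {x : Fin d → ℝ}
    (hB : IsNsCone d B) (h1 : ε₁ ∈ B) (h2 : ε₂ ∈ B) (hne : ε₁ ≠ ε₂) (he : e = ε₁ + ε₂)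
    (hw : w ⊆ B) (a : (Fin d → ℤ) → ℝ) (ha : ∀ v, 0 ≤ a v)
    (hx : x = ∑ v ∈ w, a v • Rv v)
    (hmem : x ∈ coneOf (insert e (B.erase ε₂))) :
    (if ε₂ ∈ w then a ε₂ else 0) ≤ (if ε₁ ∈ w then a ε₁ else 0) ∧
    x = (if ε₂ ∈ w then a ε₂ else 0) • Rv e
      + ((if ε₁ ∈ w then a ε₁ else 0) - (if ε₂ ∈ w then a ε₂ else 0)) • Rv ε₁
      + ∑ v ∈ (w.erase ε₁).erase ε₂, a v • Rv v := by
  subst he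
  have heB : ε₁ + ε₂ ∉ B := e_notin hB h1 h2 hne
  have hne1 : ε₁ + ε₂ ≠ ε₁ := fun h =>
    ne_zero_of_mem hB h2 (by linear_combination h)
  have hne2 : ε₁ + ε₂ ≠ ε₂ := fun h =>
    ne_zero_of_mem hB h1 (by linear_combination h)
  obtain ⟨c, hc0, hceq⟩ := mem_coneOf_iff.1 hmem
  rw [Finset.sum_insert (fun h => heB (Finset.mem_of_mem_erase h))] at hceq
  have hxb : x = ∑ v ∈ B, ((if v ∈ B.erase ε₂ then c v else 0)
      + (if v = ε₁ then c (ε₁ + ε₂) else if v = ε₂ then c (ε₁ + ε₂) else 0)) • Rv v := by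
    have hsplit : ∀ v ∈ B, ((if v ∈ B.erase ε₂ then c v else 0)
        + (if v = ε₁ then c (ε₁ + ε₂) else if v = ε₂ then c (ε₁ + ε₂) else 0)) • Rv v
        = (if v ∈ B.erase ε₂ then c v else 0) • Rv v
          + ((if v = ε₁ then c (ε₁ + ε₂) else 0) • Rv v
            + (if v = ε₂ then c (ε₁ + ε₂) else 0) • Rv v) := by
      intro v _
      rw [add_smul]
      congr 1
      by_cases hv1 : v = ε₁ <;> by_cases hv2 : v = ε₂ <;>
        simp [hv1, hv2, hne, Ne.symm hne]
    rw [Finset.sum_congr rfl hsplit, Finset.sum_add_distrib, Finset.sum_add_distrib,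
      ← sum_extend (Finset.erase_subset ε₂ B) c, sum_indicator' h1, sum_indicator' h2]
    rw [hceq, Rv_add, smul_add]
    module
  have hxa : x = ∑ v ∈ B, (if v ∈ w then a v else 0) • Rv v := by
    rw [hx, sum_extend hw]
  have huni := coeff_unique hB (hxa.symm.trans hxb)
  have hA1 : (if ε₁ ∈ w then a ε₁ else 0) = c ε₁ + c (ε₁ + ε₂) := by
    have := huni ε₁ h1
    rw [if_pos (Finset.mem_erase.2 ⟨hne, h1⟩), if_pos rfl] at this
    exact this
  have hA2 : (if ε₂ ∈ w then a ε₂ else 0) = c (ε₁ + ε₂) := by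
    have := huni ε₂ h2
    rw [if_neg (fun h : ε₂ ∈ B.erase ε₂ => (Finset.mem_erase.1 h).1 rfl),
      if_neg (fun h : ε₂ = ε₁ => hne h.symm), if_pos rfl, zero_add] at this
    exact this
  constructor
  · rw [hA1, hA2]
    linarith [hc0 ε₁]
  · have hsplit2 : ∑ v ∈ w, a v • Rv v = (∑ v ∈ (w.erase ε₁).erase ε₂, a v • Rv v)
        + (if ε₁ ∈ w then a ε₁ else 0) • Rv ε₁ + (if ε₂ ∈ w then a ε₂ else 0) • Rv ε₂ := by
      by_cases hw1 : ε₁ ∈ w <;> by_cases hw2 : ε₂ ∈ w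
      · rw [if_pos hw1, if_pos hw2]
        have hw2' : ε₂ ∈ w.erase ε₁ := Finset.mem_erase.2 ⟨fun h => hne h.symm, hw2⟩
        rw [← Finset.sum_erase_add w _ hw1, ← Finset.sum_erase_add (w.erase ε₁) _ hw2']
        abel
      · rw [if_pos hw1, if_neg hw2, Finset.erase_eq_of_notMem
          (fun h => hw2 (Finset.mem_of_mem_erase h)), ← Finset.sum_erase_add w _ hw1,
          zero_smul]
        abel
      · rw [if_neg hw1, if_pos hw2, Finset.erase_eq_of_notMem hw1,
          ← Finset.sum_erase_add w _ hw2, zero_smul]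
        abel
      · rw [if_neg hw1, if_neg hw2, Finset.erase_eq_of_notMem hw1,
          Finset.erase_eq_of_notMem hw2, zero_smul, zero_smul]
        abel
    rw [hx, hsplit2, hA1, hA2, Rv_add]
    module

lemma e_notin_F {F : Finset (Finset (Fin d → ℤ))} {ε₁ ε₂ : Fin d → ℤ}
    (hns : ∀ σ ∈ F, IsNsCone d σ) (hgen : IsGenerable F) (hne : ε₁ ≠ ε₂)
    (hmeet : ∃ σ ∈ F, ε₁ ∈ σ ∧ ε₂ ∈ σ) :
    ∀ τ ∈ F, ε₁ + ε₂ ∉ τ := by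
  intro τ hτ hmem
  obtain ⟨σ₀, hσ₀, hσ1, hσ2⟩ := hmeet
  have h1 : Rv (ε₁ + ε₂) ∈ coneOf τ := mem_coneOf_self hmem
  have h2 : Rv (ε₁ + ε₂) ∈ coneOf σ₀ := by
    rw [Rv_add]
    exact add_mem_coneOf (mem_coneOf_self hσ1) (mem_coneOf_self hσ2)
  have h3 : Rv (ε₁ + ε₂) ∈ coneOf (τ ∩ σ₀) := by
    rw [← masterF hns hgen hτ hσ₀]
    exact ⟨h1, h2⟩
  have h4 := mem_of_basis (hns τ hτ) Finset.inter_subset_left hmem h3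
  exact e_notin (hns σ₀ hσ₀) hσ1 hσ2 hne (Finset.mem_inter.1 h4).2

lemma mem_cone_insert2 {W : Finset (Fin d → ℤ)} {e : Fin d → ℤ} {x : Fin d → ℝ}
    (heW : e ∉ W) (r : ℝ) (hr : 0 ≤ r) (a : (Fin d → ℤ) → ℝ) (ha : ∀ v, 0 ≤ a v)
    (hx : x = r • Rv e + ∑ v ∈ W, a v • Rv v) :
    x ∈ coneOf (insert e W) := by
  rw [mem_coneOf_iff]
  refine ⟨fun v => if v = e then r else a v, fun v => by dsimp; split
                                                         · exact hr
                                                         · exact ha v, ?_⟩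
  rw [Finset.sum_insert heW]
  dsimp only
  rw [if_pos rfl, hx]
  congr 1
  exact Finset.sum_congr rfl fun v hv => by rw [if_neg (fun h : v = e => heW (h ▸ hv))]

lemma mem_cone_insert {W : Finset (Fin d → ℤ)} {ε₁ ε₂ e : Fin d → ℤ} {x : Fin d → ℝ}
    (hne : ε₁ ≠ ε₂) (he : e = ε₁ + ε₂) (heW : e ∉ W) (hne1 : e ≠ ε₁)
    (h1 : ε₁ ∈ W) (a : (Fin d → ℤ) → ℝ) (ha : ∀ v, 0 ≤ a v) (hle : a ε₂ ≤ a ε₁)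
    (hx : x = a ε₂ • Rv e + (a ε₁ - a ε₂) • Rv ε₁ + ∑ v ∈ (W.erase ε₁).erase ε₂, a v • Rv v) :
    x ∈ coneOf (insert e (W.erase ε₂)) := by
  have h1' : ε₁ ∈ W.erase ε₂ := Finset.mem_erase.2 ⟨hne, h1⟩
  have heW' : e ∉ W.erase ε₂ := fun h => heW (Finset.mem_of_mem_erase h)
  rw [mem_coneOf_iff]
  refine ⟨fun v => if v = e then a ε₂ else if v = ε₁ then a ε₁ - a ε₂ else a v,
    fun v => by dsimp
                split
                · exact ha ε₂
                · split
                  · linarith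
                  · exact ha v, ?_⟩
  rw [Finset.sum_insert heW']
  dsimp only
  rw [if_pos rfl, ← Finset.sum_erase_add (W.erase ε₂) _ h1',
    if_neg hne1.symm, if_pos rfl]
  have hrest : ∀ v ∈ (W.erase ε₂).erase ε₁,
      (if v = e then a ε₂ else if v = ε₁ then a ε₁ - a ε₂ else a v) • Rv v = a v • Rv v := by
    intro v hv
    have hv1 : v ≠ ε₁ := (Finset.mem_erase.1 hv).1
    have hvW : v ∈ W := Finset.mem_of_mem_erase (Finset.mem_of_mem_erase hv)
    rw [if_neg (fun h : v = e => heW (h ▸ hvW)), if_neg hv1]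
  rw [Finset.sum_congr rfl hrest, Finset.erase_right_comm, hx]
  abel

lemma bl_sub {B : Finset (Fin d → ℤ)} {ε₁ ε₂ e : Fin d → ℤ}
    (h1 : ε₁ ∈ B) (h2 : ε₂ ∈ B) (he : e = ε₁ + ε₂) :
    coneOf (insert e (B.erase ε₂)) ⊆ coneOf B := by
  apply coneOf_subset
  intro v hv
  rcases Finset.mem_insert.1 hv with h | h
  · rw [h, he, Rv_add]
    exact add_mem_coneOf (mem_coneOf_self h1) (mem_coneOf_self h2)
  · exact mem_coneOf_self (Finset.mem_of_mem_erase h)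

lemma caseB {F : Finset (Finset (Fin d → ℤ))} {ε₁ ε₂ e : Fin d → ℤ}
    {τ σ : Finset (Fin d → ℤ)}
    (hns : ∀ σ ∈ F, IsNsCone d σ) (hgen : IsGenerable F) (hne : ε₁ ≠ ε₂)
    (hmeet : ∃ σ ∈ F, ε₁ ∈ σ ∧ ε₂ ∈ σ) (he : e = ε₁ + ε₂)
    (hτ : τ ∈ F) (hτn : ¬(ε₁ ∈ τ ∧ ε₂ ∈ τ)) (hσ : σ ∈ F) (h1 : ε₁ ∈ σ) (h2 : ε₂ ∈ σ) :
    coneOf τ ∩ coneOf (insert e (σ.erase ε₂)) = coneOf (τ ∩ insert e (σ.erase ε₂)) := by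
  have heτ : e ∉ τ := he ▸ e_notin_F hns hgen hne hmeet τ hτ
  have hfin : τ ∩ insert e (σ.erase ε₂) = (τ ∩ σ).erase ε₂ := by
    ext v
    simp only [Finset.mem_inter, Finset.mem_insert, Finset.mem_erase]
    constructor
    · rintro ⟨hvτ, hv | ⟨hvne, hvσ⟩⟩
      · exact absurd (hv ▸ hvτ) heτ
      · exact ⟨hvne, hvτ, hvσ⟩
    · rintro ⟨hvne, hvτ, hvσ⟩
      exact ⟨hvτ, Or.inr ⟨hvne, hvσ⟩⟩
  rw [hfin]
  apply Set.Subset.antisymm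
  · rintro x ⟨hxτ, hxb⟩
    have hxσ : x ∈ coneOf σ := bl_sub h1 h2 he hxb
    have hx2 : x ∈ coneOf (τ ∩ σ) := by
      rw [← masterF hns hgen hτ hσ]; exact ⟨hxτ, hxσ⟩
    obtain ⟨a, ha0, hax⟩ := mem_coneOf_iff.1 hx2
    by_cases hw2 : ε₂ ∈ τ ∩ σ
    · obtain ⟨hkle, -⟩ := keyK (hns σ hσ) h1 h2 hne he Finset.inter_subset_right a ha0 hax hxb
      have hw1 : ε₁ ∉ τ ∩ σ := fun h =>
        hτn ⟨(Finset.mem_inter.1 h).1, (Finset.mem_inter.1 hw2).1⟩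
      rw [if_pos hw2, if_neg hw1] at hkle
      have ha2 : a ε₂ = 0 := le_antisymm hkle (ha0 ε₂)
      rw [mem_coneOf_iff]
      refine ⟨a, ha0, ?_⟩
      rw [hax]
      exact (Finset.sum_erase _ (by rw [ha2, zero_smul])).symm
    · rw [Finset.erase_eq_of_notMem hw2]
      exact hx2
  · intro x hx
    refine ⟨coneOf_mono (fun v hv =>
      (Finset.mem_inter.1 (Finset.mem_of_mem_erase hv)).1) hx,
      coneOf_mono (fun v hv => ?_) hx⟩
    have hvne := (Finset.mem_erase.1 hv).1
    have hvσ := (Finset.mem_inter.1 (Finset.mem_of_mem_erase hv)).2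
    exact Finset.mem_insert.2 (Or.inr (Finset.mem_erase.2 ⟨hvne, hvσ⟩))

lemma caseC {F : Finset (Finset (Fin d → ℤ))} {ε₁ ε₂ e : Fin d → ℤ}
    {σ σ' : Finset (Fin d → ℤ)}
    (hns : ∀ σ ∈ F, IsNsCone d σ) (hgen : IsGenerable F) (hne : ε₁ ≠ ε₂)
    (he : e = ε₁ + ε₂)
    (hσ : σ ∈ F) (h1 : ε₁ ∈ σ) (h2 : ε₂ ∈ σ)
    (hσ' : σ' ∈ F) (h1' : ε₁ ∈ σ') (h2' : ε₂ ∈ σ') :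
    coneOf (insert e (σ.erase ε₂)) ∩ coneOf (insert e (σ'.erase ε₂))
      = coneOf (insert e (σ.erase ε₂) ∩ insert e (σ'.erase ε₂)) := by
  have heσ : e ∉ σ := he ▸ e_notin (hns σ hσ) h1 h2 hne
  have heσ' : e ∉ σ' := he ▸ e_notin (hns σ' hσ') h1' h2' hne
  have hne1 : e ≠ ε₁ := fun h =>
    ne_zero_of_mem (hns σ hσ) h2 (by rw [he] at h; linear_combination h)
  have hfin : insert e (σ.erase ε₂) ∩ insert e (σ'.erase ε₂)
      = insert e ((σ ∩ σ').erase ε₂) := by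
    ext v
    simp only [Finset.mem_inter, Finset.mem_insert, Finset.mem_erase]
    constructor
    · rintro ⟨hv | ⟨hn, hσv⟩, hv' | ⟨hn', hσv'⟩⟩
      · exact Or.inl hv
      · exact Or.inl hv
      · exact Or.inl hv'
      · exact Or.inr ⟨hn, hσv, hσv'⟩
    · rintro (rfl | ⟨hn, hv, hv'⟩)
      · exact ⟨Or.inl rfl, Or.inl rfl⟩
      · exact ⟨Or.inr ⟨hn, hv⟩, Or.inr ⟨hn, hv'⟩⟩
  rw [hfin]
  apply Set.Subset.antisymm
  · rintro x ⟨hxb, hxb'⟩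
    have hxσ : x ∈ coneOf σ := bl_sub h1 h2 he hxb
    have hxσ' : x ∈ coneOf σ' := bl_sub h1' h2' he hxb'
    have hx2 : x ∈ coneOf (σ ∩ σ') := by
      rw [← masterF hns hgen hσ hσ']; exact ⟨hxσ, hxσ'⟩
    obtain ⟨a, ha0, hax⟩ := mem_coneOf_iff.1 hx2
    obtain ⟨hkle, hkeq⟩ := keyK (hns σ hσ) h1 h2 hne he Finset.inter_subset_left a ha0 hax hxb
    have h1w : ε₁ ∈ σ ∩ σ' := Finset.mem_inter.2 ⟨h1, h1'⟩
    have h2w : ε₂ ∈ σ ∩ σ' := Finset.mem_inter.2 ⟨h2, h2'⟩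
    rw [if_pos h1w, if_pos h2w] at hkle hkeq
    exact mem_cone_insert hne he (fun h => heσ (Finset.mem_inter.1 h).1) hne1 h1w a ha0 hkle hkeq
  · intro x hx
    refine ⟨coneOf_mono (Finset.insert_subset_insert _
      (Finset.erase_subset_erase _ Finset.inter_subset_left)) hx,
      coneOf_mono (Finset.insert_subset_insert _
      (Finset.erase_subset_erase _ Finset.inter_subset_right)) hx⟩

lemma caseD {F : Finset (Finset (Fin d → ℤ))} {ε₁ ε₂ e : Fin d → ℤ}
    {σ σ' : Finset (Fin d → ℤ)}
    (hns : ∀ σ ∈ F, IsNsCone d σ) (hgen : IsGenerable F) (hne : ε₁ ≠ ε₂)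
    (he : e = ε₁ + ε₂)
    (hσ : σ ∈ F) (h1 : ε₁ ∈ σ) (h2 : ε₂ ∈ σ)
    (hσ' : σ' ∈ F) (h1' : ε₁ ∈ σ') (h2' : ε₂ ∈ σ') :
    coneOf (insert e (σ.erase ε₂)) ∩ coneOf (insert e (σ'.erase ε₁))
      = coneOf (insert e (σ.erase ε₂) ∩ insert e (σ'.erase ε₁)) := by
  have heσ : e ∉ σ := he ▸ e_notin (hns σ hσ) h1 h2 hne
  have heσ' : e ∉ σ' := he ▸ e_notin (hns σ' hσ') h1' h2' hne
  have hfin : insert e (σ.erase ε₂) ∩ insert e (σ'.erase ε₁)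
      = insert e (((σ ∩ σ').erase ε₁).erase ε₂) := by
    ext v
    simp only [Finset.mem_inter, Finset.mem_insert, Finset.mem_erase]
    constructor
    · rintro ⟨hv | ⟨hn, hσv⟩, hv' | ⟨hn', hσv'⟩⟩
      · exact Or.inl hv
      · exact Or.inl hv
      · exact Or.inl hv'
      · exact Or.inr ⟨hn, hn', hσv, hσv'⟩
    · rintro (rfl | ⟨hn2, hn1, hv, hv'⟩)
      · exact ⟨Or.inl rfl, Or.inl rfl⟩
      · exact ⟨Or.inr ⟨hn2, hv⟩, Or.inr ⟨hn1, hv'⟩⟩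
  rw [hfin]
  apply Set.Subset.antisymm
  · rintro x ⟨hxb, hxb'⟩
    have hxσ : x ∈ coneOf σ := bl_sub h1 h2 he hxb
    have hxσ' : x ∈ coneOf σ' := bl_sub h2' h1' (he.trans (add_comm ε₁ ε₂)) hxb'
    have hx2 : x ∈ coneOf (σ ∩ σ') := by
      rw [← masterF hns hgen hσ hσ']; exact ⟨hxσ, hxσ'⟩
    obtain ⟨a, ha0, hax⟩ := mem_coneOf_iff.1 hx2
    obtain ⟨hkle, hkeq⟩ := keyK (hns σ hσ) h1 h2 hne he Finset.inter_subset_left a ha0 hax hxb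
    obtain ⟨hkle', -⟩ := keyK (hns σ' hσ') h2' h1' (Ne.symm hne)
      (he.trans (add_comm ε₁ ε₂)) Finset.inter_subset_right a ha0 hax hxb'
    have h1w : ε₁ ∈ σ ∩ σ' := Finset.mem_inter.2 ⟨h1, h1'⟩
    have h2w : ε₂ ∈ σ ∩ σ' := Finset.mem_inter.2 ⟨h2, h2'⟩
    rw [if_pos h1w, if_pos h2w] at hkle hkeq
    rw [if_pos h1w, if_pos h2w] at hkle'
    have heq : a ε₁ = a ε₂ := le_antisymm hkle' hkle
    rw [show a ε₁ - a ε₂ = 0 by rw [heq, sub_self], zero_smul, add_zero] at hkeq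
    refine mem_cone_insert2 (fun h => heσ ?_) (a ε₂) (ha0 ε₂) a ha0 hkeq
    exact (Finset.mem_inter.1 (Finset.mem_of_mem_erase (Finset.mem_of_mem_erase h))).1
  · intro x hx
    constructor
    · refine coneOf_mono (Finset.insert_subset_insert _ (fun v hv => ?_)) hx
      have h' := Finset.mem_erase.1 hv
      exact Finset.mem_erase.2 ⟨h'.1,
        (Finset.mem_inter.1 (Finset.mem_of_mem_erase h'.2)).1⟩
    · refine coneOf_mono (Finset.insert_subset_insert _ (fun v hv => ?_)) hx
      have h' := Finset.mem_erase.1 hv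
      have h'' := Finset.mem_erase.1 h'.2
      exact Finset.mem_erase.2 ⟨h''.1, (Finset.mem_inter.1 h''.2).2⟩

lemma mem_blowUp_iff {F : Finset (Finset (Fin d → ℤ))} {ε₁ ε₂ : Fin d → ℤ}
    {ρ : Finset (Fin d → ℤ)} :
    ρ ∈ blowUp F ε₁ ε₂ ↔ (ρ ∈ F ∧ ¬(ε₁ ∈ ρ ∧ ε₂ ∈ ρ)) ∨
      (∃ σ, (σ ∈ F ∧ ε₁ ∈ σ ∧ ε₂ ∈ σ) ∧
        (ρ = insert (ε₁ + ε₂) (σ.erase ε₂) ∨ ρ = insert (ε₁ + ε₂) (σ.erase ε₁))) := by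
  simp only [blowUp, Finset.mem_union, Finset.mem_filter, Finset.mem_biUnion,
    Finset.mem_insert, Finset.mem_singleton]

lemma master_blow {F : Finset (Finset (Fin d → ℤ))} {ε₁ ε₂ : Fin d → ℤ}
    (hns : ∀ σ ∈ F, IsNsCone d σ) (hgen : IsGenerable F) (hne : ε₁ ≠ ε₂)
    (hmeet : ∃ σ ∈ F, ε₁ ∈ σ ∧ ε₂ ∈ σ) :
    ∀ ρ ∈ blowUp F ε₁ ε₂, ∀ ρ' ∈ blowUp F ε₁ ε₂,
      coneOf ρ ∩ coneOf ρ' = coneOf (ρ ∩ ρ') := by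
  have hmeet' : ∃ σ ∈ F, ε₂ ∈ σ ∧ ε₁ ∈ σ := by
    obtain ⟨σ, hσ, h1, h2⟩ := hmeet; exact ⟨σ, hσ, h2, h1⟩
  intro ρ hρ ρ' hρ'
  rcases mem_blowUp_iff.1 hρ with ⟨hρF, hρn⟩ | ⟨σ, ⟨hσ, h1, h2⟩, hb | hb⟩ <;>
    rcases mem_blowUp_iff.1 hρ' with ⟨hρ'F, hρ'n⟩ | ⟨σ', ⟨hσ', h1', h2'⟩, hb' | hb'⟩
  · exact masterF hns hgen hρF hρ'F
  · subst hb'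
    exact caseB hns hgen hne hmeet rfl hρF hρn hσ' h1' h2'
  · subst hb'
    exact caseB hns hgen (Ne.symm hne) hmeet' (add_comm ε₁ ε₂) hρF
      (fun h => hρn ⟨h.2, h.1⟩) hσ' h2' h1'
  · subst hb
    rw [Set.inter_comm, Finset.inter_comm]
    exact caseB hns hgen hne hmeet rfl hρ'F hρ'n hσ h1 h2
  · subst hb; subst hb'
    exact caseC hns hgen hne rfl hσ h1 h2 hσ' h1' h2'
  · subst hb; subst hb'
    exact caseD hns hgen hne rfl hσ h1 h2 hσ' h1' h2'
  · subst hb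
    rw [Set.inter_comm, Finset.inter_comm]
    exact caseB hns hgen (Ne.symm hne) hmeet' (add_comm ε₁ ε₂) hρ'F
      (fun h => hρ'n ⟨h.2, h.1⟩) hσ h2 h1
  · subst hb; subst hb'
    rw [Set.inter_comm, Finset.inter_comm]
    exact caseD hns hgen hne rfl hσ' h1' h2' hσ h1 h2
  · subst hb; subst hb'
    exact caseC hns hgen (Ne.symm hne) (add_comm ε₁ ε₂) hσ h2 h1 hσ' h2' h1'

end BU

/-- the standard blow-up of a generable set of `d`-dimensional nonsingular
cones in `ℤ^d` along two distinct edges `ε₁ ≠ ε₂` with `Σ(ε₁) ∩ Σ(ε₂) ≠ ∅` is again a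
generable set of `d`-dimensional nonsingular cones in `ℤ^d`. -/
theorem stmt0 (d : ℕ) (F : Finset (Finset (Fin d → ℤ)))
    (hns : ∀ σ ∈ F, IsNsCone d σ) (hgen : IsGenerable F)
    (ε₁ ε₂ : Fin d → ℤ) (hne : ε₁ ≠ ε₂)
    (h1 : ε₁ ∈ edges F) (h2 : ε₂ ∈ edges F)
    (hmeet : ∃ σ ∈ F, ε₁ ∈ σ ∧ ε₂ ∈ σ) :
    (∀ σ ∈ blowUp F ε₁ ε₂, IsNsCone d σ) ∧ IsGenerable (blowUp F ε₁ ε₂) := by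
  have hnsB : ∀ ρ ∈ blowUp F ε₁ ε₂, IsNsCone d ρ := by
    intro ρ hρ
    rcases BU.mem_blowUp_iff.1 hρ with ⟨hρF, -⟩ | ⟨σ, ⟨hσ, hσ1, hσ2⟩, hb | hb⟩
    · exact hns ρ hρF
    · subst hb
      exact BU.nsBlow (hns σ hσ) hσ1 hσ2 hne rfl
    · subst hb
      exact BU.nsBlow (hns σ hσ) hσ2 hσ1 (Ne.symm hne) (add_comm ε₁ ε₂)
  refine ⟨hnsB, ?_⟩
  intro σ hσ σ' hσ' s hs s' hs'
  have hface := BU.face_master hnsB (BU.master_blow hns hgen hne hmeet) hσ hσ' hs hs'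
  exact ⟨⟨s ∩ s', Finset.inter_subset_left.trans hs, hface⟩,
    ⟨s ∩ s', Finset.inter_subset_right.trans hs', hface⟩⟩
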